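/- Fix a with -1 ≤ a < 1 and λ ∈ ℝ. Let 𝔲' = {[[x₁₁,0,0],[x₂₁,x₂₂,0],[x₃₁,-λ(x₂₂-x₃₃),x₃₃]]} ⊂ gl₃(ℝ), π(X) = (1/2)(X+Xᵀ), and A = (1/√(2(1+λ²)))(-λE₂₂ + λE₃₃ - 2E₃₂). Then π(A) is a unit vector (for ⟨X,Y⟩ = tr(XY)) orthogonal to 𝔪' = π(𝔲'), and for the orthonormal basis of 𝔪' given by π of X₁=E₁₁, X₂=(1/√2)(E₂₂+E₃₃), X₃=(1/√(2(1+λ²)))(E₂₂-E₃₃-2λE₃₂), X₄=√2E₂₁, X₅=√2E₃₁, the sum Σᵢ ⟨π([A,Xᵢ]), π(Xᵢ)⟩ equals 2λ/√(2(1+λ²)). In particular, this sum vanishes if and only if λ = 0. -/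

import Mathlib

open Matrix

noncomputable section

/-- Projection onto symmetric matrices, `dπ_e`. -/
def piSym (X : Matrix (Fin 3) (Fin 3) ℝ) : Matrix (Fin 3) (Fin 3) ℝ :=
  (1/2 : ℝ) • (X + Xᵀ)

/-- Trace inner product on matrices. -/
def ip (X Y : Matrix (Fin 3) (Fin 3) ℝ) : ℝ := (X * Y).trace

/-- A = (1/√(2(1+λ²)))(-λE₂₂ + λE₃₃ - 2E₃₂). -/
def A19 (l : ℝ) : Matrix (Fin 3) (Fin 3) ℝ :=
  (Real.sqrt (2 * (1 + l^2)))⁻¹ • !![0,0,0; 0,-l,0; 0,-2,l]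

/-- X₁ = E₁₁, X₂ = (1/√2)(E₂₂+E₃₃), X₃ = (1/√(2(1+λ²)))(E₂₂-E₃₃-2λE₃₂),
    X₄ = √2 E₂₁, X₅ = √2 E₃₁. -/
def X19 (l : ℝ) : Fin 5 → Matrix (Fin 3) (Fin 3) ℝ :=
  ![!![1,0,0; 0,0,0; 0,0,0],
    (Real.sqrt 2)⁻¹ • !![0,0,0; 0,1,0; 0,0,1],
    (Real.sqrt (2 * (1 + l^2)))⁻¹ • !![0,0,0; 0,1,0; 0,-(2*l),-1],
    Real.sqrt 2 • !![0,0,0; 1,0,0; 0,0,0],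
    Real.sqrt 2 • !![0,0,0; 0,0,0; 1,0,0]]

lemma piSym_of (a b c d e f g h i : ℝ) :
    piSym !![a,b,c;d,e,f;g,h,i] =
      !![a,(b+d)/2,(c+g)/2; (b+d)/2,e,(f+h)/2; (c+g)/2,(f+h)/2,i] := by
  ext x y
  fin_cases x <;> fin_cases y <;>
    simp [piSym, Matrix.transpose_apply, Matrix.vecHead, Matrix.vecTail] <;> ring

lemma piSym_smul (c : ℝ) (M : Matrix (Fin 3) (Fin 3) ℝ) :
    piSym (c • M) = c • piSym M := by
  simp [piSym, Matrix.transpose_smul, smul_add, smul_smul, mul_comm]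

lemma piSym_sub (M N : Matrix (Fin 3) (Fin 3) ℝ) :
    piSym (M - N) = piSym M - piSym N := by
  simp [piSym, Matrix.transpose_sub, smul_sub]
  abel

lemma ip_smul_smul (c d : ℝ) (M N : Matrix (Fin 3) (Fin 3) ℝ) :
    ip (c • M) (d • N) = c * d * ip M N := by
  unfold ip
  rw [Matrix.smul_mul, Matrix.mul_smul, Matrix.trace_smul, Matrix.trace_smul]
  simp [smul_smul]; ring

lemma ip_smul_left (c : ℝ) (M N : Matrix (Fin 3) (Fin 3) ℝ) :
    ip (c • M) N = c * ip M N := by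
  unfold ip; rw [Matrix.smul_mul, Matrix.trace_smul]; simp

lemma ip_smul_right (c : ℝ) (M N : Matrix (Fin 3) (Fin 3) ℝ) :
    ip M (c • N) = c * ip M N := by
  unfold ip; rw [Matrix.mul_smul, Matrix.trace_smul]; simp

lemma ip_sub_left (M N P : Matrix (Fin 3) (Fin 3) ℝ) :
    ip (M - N) P = ip M P - ip N P := by
  unfold ip; rw [Matrix.sub_mul, Matrix.trace_sub]

lemma ip_of (a b c d e f g h i a' b' c' d' e' f' g' h' i' : ℝ) :
    ip !![a,b,c;d,e,f;g,h,i] !![a',b',c';d',e',f';g',h',i'] =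
      a*a' + b*d' + c*g' + d*b' + e*e' + f*h' + g*c' + h*f' + i*i' := by
  simp [ip, Matrix.mul_fin_three, Matrix.trace_fin_three_of]; ring


/-- Mean-curvature computation for the orbit with parameter λ for 𝔤 = 𝔯_{3,a}:
    minimal iff λ = 0. -/
theorem mean_curvature_r3a (a l : ℝ) (ha₁ : -1 ≤ a) (ha₂ : a < 1) :
    ip (piSym (A19 l)) (piSym (A19 l)) = 1 ∧
    (∀ X : Matrix (Fin 3) (Fin 3) ℝ,
      (∃ x11 x21 x22 x31 x33 : ℝ,
        X = !![x11,0,0; x21,x22,0; x31, -l * (x22 - x33), x33]) →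
      ip (piSym (A19 l)) (piSym X) = 0) ∧
    (∀ i j : Fin 5,
      ip (piSym (X19 l i)) (piSym (X19 l j)) = if i = j then 1 else 0) ∧
    (∑ i : Fin 5,
        ip (piSym (A19 l * X19 l i - X19 l i * A19 l)) (piSym (X19 l i))
      = 2 * l / Real.sqrt (2 * (1 + l^2))) ∧
    ((∑ i : Fin 5,
        ip (piSym (A19 l * X19 l i - X19 l i * A19 l)) (piSym (X19 l i)) = 0)
      ↔ l = 0) := by
  have hs : Real.sqrt (2 * (1 + l^2)) ^ 2 = 2 * (1 + l^2) :=
    Real.sq_sqrt (by positivity)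
  have hs0 : Real.sqrt (2 * (1 + l^2)) ≠ 0 := by positivity
  have h2 : Real.sqrt 2 ^ 2 = 2 := Real.sq_sqrt (by norm_num)
  have h20 : Real.sqrt 2 ≠ 0 := by positivity
  have part1 : ip (piSym (A19 l)) (piSym (A19 l)) = 1 := by
    rw [A19, piSym_smul, ip_smul_smul, piSym_of, ip_of]
    generalize Real.sqrt (2 * (1 + l ^ 2)) = s at hs hs0 ⊢
    field_simp
    nlinarith [hs]
  have part2 : ∀ X : Matrix (Fin 3) (Fin 3) ℝ,
      (∃ x11 x21 x22 x31 x33 : ℝ,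
        X = !![x11,0,0; x21,x22,0; x31, -l * (x22 - x33), x33]) →
      ip (piSym (A19 l)) (piSym X) = 0 := by
    rintro X ⟨x11, x21, x22, x31, x33, rfl⟩
    rw [A19, piSym_smul, piSym_of, piSym_of, ip_smul_left, ip_of]
    generalize Real.sqrt (2 * (1 + l ^ 2)) = s at hs hs0 ⊢
    field_simp
    ring
  have part3 : ∀ i j : Fin 5,
      ip (piSym (X19 l i)) (piSym (X19 l j)) = if i = j then 1 else 0 := by
    intro i j
    fin_cases i <;> fin_cases j <;>
    · first | rw [if_pos rfl] | rw [if_neg (by decide)]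
      simp only [show ((⟨0, by omega⟩ : Fin 5) = 0) from rfl,
        show ((⟨1, by omega⟩ : Fin 5) = 1) from rfl,
        show ((⟨2, by omega⟩ : Fin 5) = 2) from rfl,
        show ((⟨3, by omega⟩ : Fin 5) = 3) from rfl,
        show ((⟨4, by omega⟩ : Fin 5) = 4) from rfl,
        X19, Matrix.cons_val_zero, Matrix.cons_val_one,
        Matrix.cons_val_two, Matrix.cons_val_three, Matrix.cons_val_four, Matrix.cons_val_succ,
        Matrix.head_cons, Matrix.vecHead, Matrix.vecTail, Function.comp,
        piSym_smul, piSym_of, ip_smul_smul, ip_smul_left, ip_smul_right, ip_of]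
      generalize Real.sqrt (2 * (1 + l ^ 2)) = s at hs hs0 ⊢
      first
        | ring1
        | nlinarith [hs, h2]
        | (field_simp [h20, hs0]; all_goals nlinarith [hs, h2])
        | (field_simp [h20, hs0]; all_goals ring1)
        | norm_num
  have part4 : (∑ i : Fin 5,
        ip (piSym (A19 l * X19 l i - X19 l i * A19 l)) (piSym (X19 l i))
      = 2 * l / Real.sqrt (2 * (1 + l^2))) := by
    rw [Fin.sum_univ_five]
    simp only [show ((⟨0, by omega⟩ : Fin 5) = 0) from rfl,
        show ((⟨1, by omega⟩ : Fin 5) = 1) from rfl,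
        show ((⟨2, by omega⟩ : Fin 5) = 2) from rfl,
        show ((⟨3, by omega⟩ : Fin 5) = 3) from rfl,
        show ((⟨4, by omega⟩ : Fin 5) = 4) from rfl,
        X19, A19, Matrix.cons_val_zero, Matrix.cons_val_one,
      Matrix.cons_val_two, Matrix.cons_val_three, Matrix.cons_val_four, Matrix.cons_val_succ,
      Matrix.head_cons, Matrix.vecHead, Matrix.vecTail, Function.comp,
      Matrix.smul_mul, Matrix.mul_smul, smul_smul, Matrix.mul_fin_three,
      piSym_sub, piSym_smul, piSym_of,
      ip_sub_left, ip_smul_smul, ip_smul_left, ip_smul_right, ip_of]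
    generalize Real.sqrt (2 * (1 + l ^ 2)) = s at hs hs0 ⊢
    field_simp
    ring_nf
    linear_combination (-16 * l) * hs + (16 * l - 8 * l * s ^ 2 + 16 * l ^ 3) * h2
  refine ⟨part1, part2, part3, part4, ?_⟩
  rw [part4, div_eq_zero_iff]
  constructor
  · rintro (h | h)
    · linarith
    · exact absurd h hs0
  · intro h; left; rw [h]; ring
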